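/- arXiv:1312.4632 — 5 statements merged into one kernel-verified Lean document; each statement's English description precedes it below -/
import Mathlib

section
/- The function f(a) = (sinh(ca)/sinh(cL)) · exp(∫_a^L c/sinh(cu) du) satisfies the integral equation f(a) = sinh(ca)/sinh(cL) + ∫_a^L (c sinh(ca)/sinh²(cx)) f(x) dx for all 0 < a < L, and f(L) = 1. -/
open Real

/-- `f a = (sinh (c a) / sinh (c L)) · exp (∫_a^L c / sinh (c u) du)` satisfies the
integral equation `f a = sinh (c a) / sinh (c L) + ∫_a^L (c sinh (c a) / sinh² (c x)) f x dx`
for `0 < a < L`, and `f L = 1`. -/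
theorem stmt_6 (c L : ℝ) (hc : 0 < c) (hL : 0 < L)
    (f : ℝ → ℝ)
    (hf : ∀ a : ℝ, f a = Real.sinh (c * a) / Real.sinh (c * L) *
      Real.exp (∫ u in a..L, c / Real.sinh (c * u))) :
    (∀ a : ℝ, 0 < a → a < L →
      f a = Real.sinh (c * a) / Real.sinh (c * L)
        + ∫ x in a..L, c * Real.sinh (c * a) / (Real.sinh (c * x)) ^ 2 * f x)
    ∧ f L = 1 := by
  have hsL : Real.sinh (c * L) ≠ 0 := ne_of_gt (Real.sinh_pos_iff.2 (mul_pos hc hL))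
  set h : ℝ → ℝ := fun u => c / Real.sinh (c * u) with hh
  set F : ℝ → ℝ := fun y => ∫ u in y..L, h u with hF
  constructor
  · intro a ha haL
    have hsx : ∀ x ∈ Set.Icc a L, Real.sinh (c * x) ≠ 0 := fun x hx =>
      ne_of_gt (Real.sinh_pos_iff.2 (mul_pos hc (lt_of_lt_of_le ha hx.1)))
    have hcont : ContinuousOn h (Set.Icc a L) := by
      apply ContinuousOn.div continuousOn_const
        ((Real.continuous_sinh.comp (continuous_const.mul continuous_id)).continuousOn)
      exact hsx
    have hint : IntervalIntegrable h MeasureTheory.volume a L :=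
      hcont.intervalIntegrable_of_Icc haL.le
    have key : ∀ x ∈ Set.Icc a L, HasDerivAt F (-(h x)) x := by
      intro x hx
      have hca : ContinuousAt h x := by
        have : ∀ᶠ y in nhds x, Real.sinh (c * y) ≠ 0 := by
          have hxpos : 0 < x := lt_of_lt_of_le ha hx.1
          filter_upwards [eventually_gt_nhds hxpos] with y hy
          exact ne_of_gt (Real.sinh_pos_iff.2 (mul_pos hc hy))
        exact ContinuousAt.div continuousAt_const
          ((Real.continuous_sinh.comp (continuous_const.mul continuous_id)).continuousAt)
          (ne_of_gt (Real.sinh_pos_iff.2 (mul_pos hc (lt_of_lt_of_le ha hx.1))))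
      have hint' : IntervalIntegrable h MeasureTheory.volume L x := by
        apply hint.symm.mono_set
        rw [Set.uIcc_of_ge hx.2, Set.uIcc_comm, Set.uIcc_of_le haL.le]
        exact Set.Icc_subset_Icc hx.1 le_rfl
      have := intervalIntegral.integral_hasDerivAt_right hint'
        (((Real.continuous_sinh.comp (continuous_const.mul continuous_id)).measurable.const_div c).aestronglyMeasurable.stronglyMeasurableAtFilter) hca
      have hneg : HasDerivAt (-fun u => ∫ (x : ℝ) in L..u, h x) (-h x) x := this.neg
      convert hneg using 1
      funext y
      simp [hF, intervalIntegral.integral_symm L y]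
    -- Φ y = -(sinh(ca)/sinh(cL)) * exp (F y)
    set K : ℝ := Real.sinh (c * a) / Real.sinh (c * L) with hK
    have keyΦ : ∀ x ∈ Set.Icc a L,
        HasDerivAt (fun y => -(K * Real.exp (F y)))
          (c * Real.sinh (c * a) / (Real.sinh (c * x)) ^ 2 * f x) x := by
      intro x hx
      have hd : HasDerivAt (fun y => -(K * Real.exp (F y))) (-(K * (Real.exp (F x) * -h x))) x :=
        (((key x hx).exp).const_mul K).neg
      convert hd using 1
      rw [hf x]
      have hsx' := hsx x hx
      field_simp [hh, hF, hK]
      show c * Real.sinh (c * a) * Real.exp (∫ u in x..L, h u) = Real.sinh (c * x) * Real.sinh (c * L) * (Real.sinh (c * a) / Real.sinh (c * L)) * Real.exp (∫ u in x..L, h u) * (c / Real.sinh (c * x))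
      field_simp
    have hcF : ContinuousOn F (Set.Icc a L) := fun x hx =>
      (key x hx).continuousAt.continuousWithinAt
    have hcint : IntervalIntegrable
        (fun x => c * Real.sinh (c * a) / (Real.sinh (c * x)) ^ 2 * f x)
        MeasureTheory.volume a L := by
      have hfe : f = fun x => Real.sinh (c * x) / Real.sinh (c * L) * Real.exp (F x) :=
        funext hf
      apply ContinuousOn.intervalIntegrable_of_Icc haL.le
      apply ContinuousOn.mul
      · apply ContinuousOn.div continuousOn_const
        · exact (((Real.continuous_sinh.comp (continuous_const.mul continuous_id)).pow 2).continuousOn)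
        · intro x hx; exact pow_ne_zero 2 (hsx x hx)
      · rw [hfe]
        apply ContinuousOn.mul
        · exact ContinuousOn.div
            ((Real.continuous_sinh.comp (continuous_const.mul continuous_id)).continuousOn)
            continuousOn_const (fun x _ => hsL)
        · exact hcF.rexp
    have hFTC := intervalIntegral.integral_eq_sub_of_hasDerivAt
      (fun x hx => keyΦ x (by rwa [Set.uIcc_of_le haL.le] at hx)) hcint
    rw [hFTC]
    have hFL : F L = 0 := by simp [hF]
    rw [hf a, hFL]
    simp
    rfl
  · rw [hf L]
    simp [hsL]
end

section
/- The limit as a ↓ 0 of (sinh(ca)/sinh(cL)) · exp(∫_a^L c/sinh(cu) du) equals 2/(1 + cosh(cL)). -/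
open Real Filter

/-- As `a ↓ 0`, `(sinh (c a) / sinh (c L)) · exp (∫_a^L c / sinh (c u) du)` tends to
`2 / (1 + cosh (c L))`. -/
theorem stmt_8 (c L : ℝ) (hc : 0 < c) (hL : 0 < L) :
    Filter.Tendsto
      (fun a : ℝ => Real.sinh (c * a) / Real.sinh (c * L) *
        Real.exp (∫ u in a..L, c / Real.sinh (c * u)))
      (nhdsWithin 0 (Set.Ioi 0)) (nhds (2 / (1 + Real.cosh (c * L)))) := by
  have hcoshL : (0:ℝ) < 1 + Real.cosh (c * L) := by positivity
  have hsinhL : 0 < Real.sinh (c * L) := Real.sinh_pos_iff.2 (by positivity)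
  -- the simplified function
  have key : ∀ a ∈ Set.Ioi (0:ℝ),
      Real.sinh (c * a) / Real.sinh (c * L) *
        Real.exp (∫ u in a..L, c / Real.sinh (c * u))
      = (1 + Real.cosh (c * a)) / (1 + Real.cosh (c * L)) := by
    intro a ha
    have ha : (0:ℝ) < a := ha
    set F : ℝ → ℝ := fun u => Real.log (Real.sinh (c * u)) - Real.log (1 + Real.cosh (c * u))
      with hF
    have hmin : 0 < min a L := lt_min ha hL
    have hderiv : ∀ x ∈ Set.uIcc a L, HasDerivAt F (c / Real.sinh (c * x)) x := by
      intro x hx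
      have hx0 : 0 < x := lt_of_lt_of_le hmin hx.1
      have hs : 0 < Real.sinh (c * x) := Real.sinh_pos_iff.2 (by positivity)
      have hch : (0:ℝ) < 1 + Real.cosh (c * x) := by positivity
      have hlin : HasDerivAt (fun y : ℝ => c * y) c x := by
        simpa using (hasDerivAt_id x).const_mul c
      have h1 : HasDerivAt (fun y => Real.log (Real.sinh (c * y)))
          (Real.cosh (c * x) * c / Real.sinh (c * x)) x :=
        (((Real.hasDerivAt_sinh (c * x)).comp x hlin).log hs.ne')
      have h2 : HasDerivAt (fun y => Real.log (1 + Real.cosh (c * y)))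
          (Real.sinh (c * x) * c / (1 + Real.cosh (c * x))) x := by
        have := ((Real.hasDerivAt_cosh (c * x)).comp x hlin).const_add 1
        exact (this.log hch.ne')
      have := h1.sub h2
      refine this.congr_deriv (Eq.symm ?_)
      have hid : Real.cosh (c * x) ^ 2 - Real.sinh (c * x) ^ 2 = 1 :=
        Real.cosh_sq_sub_sinh_sq (c * x)
      field_simp
      linear_combination (-1 : ℝ) * hid
    have hcont : IntervalIntegrable (fun u => c / Real.sinh (c * u)) MeasureTheory.volume a L := by
      apply ContinuousOn.intervalIntegrable
      apply ContinuousOn.div continuousOn_const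
      · exact (Real.continuous_sinh.comp (continuous_const.mul continuous_id)).continuousOn
      · intro x hx
        have hx0 : 0 < x := lt_of_lt_of_le hmin hx.1
        exact (Real.sinh_pos_iff.2 (by positivity)).ne'
    have hint : (∫ u in a..L, c / Real.sinh (c * u)) = F L - F a :=
      intervalIntegral.integral_eq_sub_of_hasDerivAt hderiv hcont
    have hsa : 0 < Real.sinh (c * a) := Real.sinh_pos_iff.2 (by positivity)
    have hca : (0:ℝ) < 1 + Real.cosh (c * a) := by positivity
    rw [hint, hF]
    rw [show Real.log (Real.sinh (c * L)) - Real.log (1 + Real.cosh (c * L)) -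
        (Real.log (Real.sinh (c * a)) - Real.log (1 + Real.cosh (c * a)))
      = (Real.log (Real.sinh (c * L)) + Real.log (1 + Real.cosh (c * a))) -
        (Real.log (1 + Real.cosh (c * L)) + Real.log (Real.sinh (c * a))) by ring]
    rw [Real.exp_sub, ← Real.log_mul hsinhL.ne' hca.ne', ← Real.log_mul hcoshL.ne' hsa.ne',
      Real.exp_log (by positivity), Real.exp_log (by positivity)]
    field_simp
  have hlim : Filter.Tendsto (fun a : ℝ => (1 + Real.cosh (c * a)) / (1 + Real.cosh (c * L)))
      (nhdsWithin 0 (Set.Ioi 0)) (nhds (2 / (1 + Real.cosh (c * L)))) := by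
    have : Continuous fun a : ℝ => (1 + Real.cosh (c * a)) / (1 + Real.cosh (c * L)) := by
      exact (continuous_const.add (Real.continuous_cosh.comp
        (continuous_const.mul continuous_id))).div_const _
    have h0 : Filter.Tendsto (fun a : ℝ => (1 + Real.cosh (c * a)) / (1 + Real.cosh (c * L)))
        (nhdsWithin 0 (Set.Ioi 0)) (nhds ((1 + Real.cosh (c * 0)) / (1 + Real.cosh (c * L)))) :=
      (this.tendsto 0).mono_left nhdsWithin_le_nhds
    norm_num at h0
    exact h0
  refine hlim.congr' ?_
  filter_upwards [self_mem_nhdsWithin] with a ha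
  exact (key a ha).symm
end

section
/- For a > 0 and s > 0, ∫_0^∞ e^{-st} · (a/(√(2π) t^{3/2})) · exp(-a²/(2t)) dt = exp(-a√(2s)). -/
open Real MeasureTheory

lemma img_divsq {b : ℝ} (hb : 0 < b) : (fun u : ℝ => b/u^2) '' Set.Ioi 0 = Set.Ioi 0 := by
  ext t
  constructor
  · rintro ⟨u, hu, rfl⟩
    have hu' : (0:ℝ) < u := hu
    exact div_pos hb (by positivity)
  · intro ht
    have ht' : (0:ℝ) < t := ht
    refine ⟨Real.sqrt (b / t), Real.sqrt_pos.2 (div_pos hb ht'), ?_⟩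
    have : Real.sqrt (b/t) ^ 2 = b / t := Real.sq_sqrt (le_of_lt (div_pos hb ht'))
    simp only [this]
    field_simp

lemma img_div {c : ℝ} (hc : 0 < c) : (fun u : ℝ => c/u) '' Set.Ioi 0 = Set.Ioi 0 := by
  ext t
  constructor
  · rintro ⟨u, hu, rfl⟩
    have hu' : (0:ℝ) < u := hu
    exact div_pos hc hu'
  · intro ht
    have ht' : (0:ℝ) < t := ht
    exact ⟨c / t, div_pos hc ht', by field_simp⟩

lemma img_sub {c : ℝ} (hc : 0 < c) : (fun u : ℝ => u - c/u) '' Set.Ioi 0 = Set.univ := by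
  ext v
  simp only [Set.mem_univ, iff_true]
  have hr : Real.sqrt (v^2 + 4*c) ^ 2 = v^2 + 4*c := Real.sq_sqrt (by positivity)
  have hrn : 0 ≤ Real.sqrt (v^2 + 4*c) := Real.sqrt_nonneg _
  set r := Real.sqrt (v^2 + 4*c)
  have hu : 0 < (v + r)/2 := by nlinarith [sq_nonneg (v + r), sq_nonneg (v - r)]
  refine ⟨(v + r)/2, hu, ?_⟩
  have h0 : (v + r)/2 ≠ 0 := ne_of_gt hu
  have hcd : c / ((v + r)/2) = (v + r)/2 - v := by
    rw [div_eq_iff h0]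
    linear_combination -hr / 4
  simp only [hcd]
  ring

lemma injOn_sub {c : ℝ} (hc : 0 < c) : Set.InjOn (fun u : ℝ => u - c/u) (Set.Ioi 0) := by
  apply StrictMonoOn.injOn
  intro x hx y hy hxy
  have hx' : (0:ℝ) < x := hx
  have hy' : (0:ℝ) < y := hy
  have h1 : c / y < c / x := div_lt_div_of_pos_left hc hx' hxy
  simp only
  linarith

set_option maxHeartbeats 800000 in
lemma key_int {c : ℝ} (hc : 0 < c) :
    ∫ u in Set.Ioi (0:ℝ), Real.exp (-(u - c/u)^2/2) = Real.sqrt (2*Real.pi) / 2 := by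
  set h : ℝ → ℝ := fun u => Real.exp (-(u - c/u)^2/2) with hh
  -- derivative facts
  have hd1 : ∀ x ∈ Set.Ioi (0:ℝ),
      HasDerivWithinAt (fun u : ℝ => u - c/u) (1 + c/x^2) (Set.Ioi 0) x := by
    intro x hx
    have hx' : (0:ℝ) < x := hx
    have : HasDerivAt (fun u : ℝ => u - c/u) (1 - (0*x - c*1)/x^2) x :=
      (hasDerivAt_id x).sub (((hasDerivAt_const x c).div (hasDerivAt_id x) hx'.ne'))
    refine this.hasDerivWithinAt.congr_deriv ?_
    ring
  have hd2 : ∀ x ∈ Set.Ioi (0:ℝ),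
      HasDerivWithinAt (fun u : ℝ => c/u) (-(c/x^2)) (Set.Ioi 0) x := by
    intro x hx
    have hx' : (0:ℝ) < x := hx
    have : HasDerivAt (fun u : ℝ => c/u) ((0*x - c*1)/x^2) x :=
      (hasDerivAt_const x c).div (hasDerivAt_id x) hx'.ne'
    refine this.hasDerivWithinAt.congr_deriv ?_
    ring
  have hinj2 : Set.InjOn (fun u : ℝ => c/u) (Set.Ioi 0) := by
    intro x hx y hy hxy
    have hx' : (0:ℝ) < x := hx
    have hy' : (0:ℝ) < y := hy
    simp only at hxy
    rw [div_eq_div_iff hx'.ne' hy'.ne'] at hxy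
    exact (mul_left_cancel₀ hc.ne' hxy).symm
  -- step C : ∫ (1+c/u²) h = √(2π)
  have stepC : ∫ u in Set.Ioi (0:ℝ), (1 + c/u^2) * h u = Real.sqrt (2*Real.pi) := by
    have := integral_image_eq_integral_abs_deriv_smul measurableSet_Ioi hd1 (injOn_sub hc)
      (fun v => Real.exp (-v^2/2))
    rw [img_sub hc] at this
    have gauss : ∫ v : ℝ, Real.exp (-v^2/2) = Real.sqrt (2*Real.pi) := by
      have := integral_gaussian (1/2)
      rw [show Real.sqrt (π / (1/2)) = Real.sqrt (2*π) by norm_num [mul_comm]] at this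
      rw [← this]
      congr 1 with v
      ring_nf
    rw [Measure.restrict_univ] at this
    rw [← gauss, this]
    apply setIntegral_congr_fun measurableSet_Ioi
    intro x hx
    have hx' : (0:ℝ) < x := hx
    have habs : |1 + c/x^2| = 1 + c/x^2 := abs_of_pos (by positivity)
    simp only [smul_eq_mul, habs, hh]
  -- step B : ∫ (c/u²) h = ∫ h
  have stepB : ∫ u in Set.Ioi (0:ℝ), (c/u^2) * h u = ∫ u in Set.Ioi (0:ℝ), h u := by
    have := integral_image_eq_integral_abs_deriv_smul measurableSet_Ioi hd2 hinj2 h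
    rw [img_div hc] at this
    rw [this]
    apply setIntegral_congr_fun measurableSet_Ioi
    intro x hx
    have hx' : (0:ℝ) < x := hx
    have habs : |(-(c/x^2))| = c/x^2 := by rw [abs_neg]; exact abs_of_pos (by positivity)
    have harg : c/x - c/(c/x) = -(x - c/x) := by
      rw [div_div_eq_mul_div, mul_comm, mul_div_assoc, div_self hc.ne', mul_one]
      ring
    simp only [smul_eq_mul, habs, hh, harg]
    ring_nf
  -- integrability
  have hmeas : AEStronglyMeasurable h (volume.restrict (Set.Ioi 0)) := by
    apply Measurable.aestronglyMeasurable
    fun_prop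
  have hint : IntegrableOn h (Set.Ioi 0) := by
    have hg : Integrable (fun u : ℝ => Real.exp c * Real.exp (-(1/2) * u^2)) :=
      (integrable_exp_neg_mul_sq (by norm_num : (0:ℝ) < 1/2)).const_mul _
    apply Integrable.mono' hg.integrableOn hmeas
    filter_upwards [ae_restrict_mem measurableSet_Ioi] with x hx
    have hx' : (0:ℝ) < x := hx
    rw [Real.norm_eq_abs, abs_of_pos (Real.exp_pos _), ← Real.exp_add]
    show Real.exp (-(x - c/x)^2/2) ≤ _
    apply Real.exp_le_exp.2
    have : 0 ≤ c^2/(2*x^2) := by positivity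
    have hexpand : -(x - c/x)^2/2 = -(1/2)*x^2 + c - c^2/(2*x^2) := by
      field_simp
      ring
    rw [hexpand]
    linarith
  have hint2 : IntegrableOn (fun u => (c/u^2) * h u) (Set.Ioi 0) := by
    have := (integrableOn_image_iff_integrableOn_abs_deriv_smul measurableSet_Ioi hd2 hinj2 h)
    rw [img_div hc] at this
    have h2 := this.1 hint
    apply h2.congr_fun ?_ measurableSet_Ioi
    intro x hx
    have hx' : (0:ℝ) < x := hx
    have habs : |(-(c/x^2))| = c/x^2 := by rw [abs_neg]; exact abs_of_pos (by positivity)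
    have harg : c/x - c/(c/x) = -(x - c/x) := by
      rw [div_div_eq_mul_div, mul_comm, mul_div_assoc, div_self hc.ne', mul_one]
      ring
    simp only [smul_eq_mul, habs, hh, harg]
    ring_nf
  -- combine
  have hsplit : ∫ u in Set.Ioi (0:ℝ), (1 + c/u^2) * h u
      = (∫ u in Set.Ioi (0:ℝ), h u) + ∫ u in Set.Ioi (0:ℝ), (c/u^2) * h u := by
    rw [← integral_add hint hint2]
    apply setIntegral_congr_fun measurableSet_Ioi
    intro x hx
    ring
  rw [hsplit, stepB] at stepC
  linarith

set_option maxHeartbeats 800000 in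
/-- Laplace transform of the stable-1/2 first-passage density:
`∫_0^∞ e^{-st} (a / (√(2π) t^{3/2})) e^{-a²/(2t)} dt = e^{-a √(2s)}` for `a, s > 0`. -/
theorem stmt_11 (a s : ℝ) (ha : 0 < a) (hs : 0 < s) :
    ∫ t in Set.Ioi (0 : ℝ),
        Real.exp (-s * t) * (a / (Real.sqrt (2 * Real.pi) * t ^ ((3 : ℝ) / 2)))
          * Real.exp (-a ^ 2 / (2 * t))
      = Real.exp (-a * Real.sqrt (2 * s)) := by
  set c : ℝ := a * Real.sqrt (2 * s) with hcdef
  have hc : 0 < c := mul_pos ha (Real.sqrt_pos.2 (by linarith))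
  have hc2 : c^2 = 2 * s * a^2 := by
    rw [hcdef, mul_pow, Real.sq_sqrt (by linarith : (0:ℝ) ≤ 2*s)]
    ring
  have hsqpi : (0:ℝ) < Real.sqrt (2 * Real.pi) := Real.sqrt_pos.2 (by positivity)
  -- substitution t = a²/u²
  have hd : ∀ x ∈ Set.Ioi (0:ℝ),
      HasDerivWithinAt (fun u : ℝ => a^2/u^2) (-(2*a^2/x^3)) (Set.Ioi 0) x := by
    intro x hx
    have hx' : (0:ℝ) < x := hx
    have : HasDerivAt (fun u : ℝ => a^2/u^2) ((0*x^2 - a^2*(2*x^(2-1)))/(x^2)^2) x :=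
      (hasDerivAt_const x (a^2)).div (hasDerivAt_pow 2 x) (by positivity)
    refine this.hasDerivWithinAt.congr_deriv ?_
    rw [div_eq_iff (by positivity)]
    field_simp
    ring
  have hinj : Set.InjOn (fun u : ℝ => a^2/u^2) (Set.Ioi 0) := by
    intro x hx y hy hxy
    have hx' : (0:ℝ) < x := hx
    have hy' : (0:ℝ) < y := hy
    simp only at hxy
    field_simp at hxy
    nlinarith
  have hsub := integral_image_eq_integral_abs_deriv_smul measurableSet_Ioi hd hinj
    (fun t => Real.exp (-s * t) * (a / (Real.sqrt (2 * Real.pi) * t ^ ((3 : ℝ) / 2)))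
      * Real.exp (-a ^ 2 / (2 * t)))
  rw [img_divsq (by positivity : (0:ℝ) < a^2)] at hsub
  rw [hsub]
  -- simplify the substituted integrand
  have hcong : ∀ x ∈ Set.Ioi (0:ℝ),
      |(-(2*a^2/x^3))| • (Real.exp (-s * (a^2/x^2))
        * (a / (Real.sqrt (2 * Real.pi) * (a^2/x^2) ^ ((3 : ℝ) / 2)))
        * Real.exp (-a ^ 2 / (2 * (a^2/x^2))))
      = (2 / Real.sqrt (2*Real.pi)) * Real.exp (-c) * Real.exp (-(x - c/x)^2/2) := by
    intro x hx
    have hx' : (0:ℝ) < x := hx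
    have habs : |(-(2*a^2/x^3))| = 2*a^2/x^3 := by
      rw [abs_neg]; exact abs_of_pos (by positivity)
    have hpow : (a^2/x^2) ^ ((3:ℝ)/2) = a^3/x^3 := by
      rw [show a^2/x^2 = (a/x)^2 by ring, ← Real.rpow_natCast (a/x) 2,
        ← Real.rpow_mul (by positivity : (0:ℝ) ≤ a/x)]
      norm_num
      exact div_pow a x 3
    rw [smul_eq_mul, habs, hpow]
    rw [show -a^2/(2*(a^2/x^2)) = -(1/2)*x^2 by field_simp]
    rw [show -s * (a^2/x^2) = -(s*a^2)/x^2 by ring]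
    have hexp : Real.exp (-(s*a^2)/x^2) * Real.exp (-(1/2)*x^2)
        = Real.exp (-c) * Real.exp (-(x - c/x)^2/2) := by
      rw [← Real.exp_add, ← Real.exp_add]
      congr 1
      field_simp
      linear_combination hc2
    have hfac : 2*a^2/x^3 * (a / (Real.sqrt (2*Real.pi) * (a^3/x^3)))
        = 2 / Real.sqrt (2*Real.pi) := by
      field_simp
    calc 2*a^2/x^3 * (Real.exp (-(s*a^2)/x^2) * (a / (Real.sqrt (2*Real.pi) * (a^3/x^3)))
          * Real.exp (-(1/2)*x^2))
        = (2*a^2/x^3 * (a / (Real.sqrt (2*Real.pi) * (a^3/x^3))))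
          * (Real.exp (-(s*a^2)/x^2) * Real.exp (-(1/2)*x^2)) := by ring
      _ = (2 / Real.sqrt (2*Real.pi)) * (Real.exp (-c) * Real.exp (-(x - c/x)^2/2)) := by
          rw [hfac, hexp]
      _ = (2 / Real.sqrt (2*Real.pi)) * Real.exp (-c) * Real.exp (-(x - c/x)^2/2) := by ring
  rw [setIntegral_congr_fun measurableSet_Ioi hcong]
  rw [integral_const_mul, key_int hc]
  rw [show -a * Real.sqrt (2*s) = -c by rw [hcdef]; ring]
  field_simp
end

section
/- The function p(t) = Σ_{n=0}^∞ 4(-1)^n (n+1)²/(√(2π) t^{3/2}) · exp(-(n+1)²/(2t)) on (0,∞) has Laplace transform ∫_0^∞ e^{-st} p(t) dt = 1/cosh²(√(s/2)) for all s > 0. -/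
open Real MeasureTheory

open Set

lemma image_inv_mul (b : ℝ) (hb : 0 < b) : (fun v : ℝ => b / v) '' Ioi 0 = Ioi 0 := by
  ext y
  constructor
  · rintro ⟨v, hv, rfl⟩
    exact div_pos hb hv
  · intro hy
    exact ⟨b / y, div_pos hb hy, by field_simp⟩

lemma image_psi (b : ℝ) (hb : 0 < b) : (fun v : ℝ => v - b / v) '' Ioi 0 = univ := by
  ext u
  simp only [mem_univ, iff_true, mem_image, mem_Ioi]
  have h1 : |u| < Real.sqrt (u ^ 2 + 4 * b) := by
    have := Real.sqrt_lt_sqrt (sq_nonneg u) (by linarith : u ^ 2 < u ^ 2 + 4 * b)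
    rwa [Real.sqrt_sq_eq_abs] at this
  have h2 := neg_lt_of_abs_lt h1
  have hv : 0 < (u + Real.sqrt (u ^ 2 + 4 * b)) / 2 := by linarith
  refine ⟨(u + Real.sqrt (u ^ 2 + 4 * b)) / 2, hv, ?_⟩
  have hr : Real.sqrt (u ^ 2 + 4 * b) ^ 2 = u ^ 2 + 4 * b := Real.sq_sqrt (by positivity)
  have hne : u + Real.sqrt (u ^ 2 + 4 * b) ≠ 0 := by linarith
  field_simp [hne]
  nlinarith [hr]

lemma injOn_psi (b : ℝ) (hb : 0 < b) : InjOn (fun v : ℝ => v - b / v) (Ioi 0) := by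
  intro x hx y hy h
  simp only [mem_Ioi] at hx hy
  simp only at h
  have h2 : (x - b / x) * (x * y) = (y - b / y) * (x * y) := by rw [h]
  have e1 : (x - b / x) * (x * y) = x ^ 2 * y - b * y := by field_simp
  have e2 : (y - b / y) * (x * y) = y ^ 2 * x - b * x := by field_simp
  have key : (x - y) * (x * y + b) = 0 := by linear_combination -e1 + h2 + e2
  rcases mul_eq_zero.mp key with h3 | h3
  · linarith
  · nlinarith [mul_pos hx hy]

lemma contOn_g (b : ℝ) : ContinuousOn (fun v : ℝ => Real.exp (-(v - b / v) ^ 2 / 2)) (Ioi 0) := by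
  apply (Real.continuous_exp.comp_continuousOn)
  apply ContinuousOn.div_const
  apply ContinuousOn.neg
  apply ContinuousOn.pow
  exact continuousOn_id.sub (continuousOn_const.div continuousOn_id
    (fun x hx => (mem_Ioi.mp hx).ne'))

lemma glasser (b : ℝ) (hb : 0 < b) :
    ∫ v in Ioi (0:ℝ), Real.exp (-v ^ 2 / 2 - b ^ 2 / (2 * v ^ 2))
      = Real.sqrt (π / 2) * Real.exp (-b) := by
  set g : ℝ → ℝ := fun v => Real.exp (-(v - b / v) ^ 2 / 2) with hg
  have hderiv1 : ∀ v ∈ Ioi (0:ℝ),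
      HasDerivWithinAt (fun v : ℝ => b / v) (-(b / v ^ 2)) (Ioi 0) v := by
    intro v hv
    simp only [mem_Ioi] at hv
    have h := (hasDerivAt_inv hv.ne').const_mul b
    have : HasDerivAt (fun v : ℝ => b / v) (-(b / v ^ 2)) v := by
      simpa [div_eq_mul_inv, mul_comm, neg_mul, mul_neg] using h
    exact this.hasDerivWithinAt
  have hderiv2 : ∀ v ∈ Ioi (0:ℝ),
      HasDerivWithinAt (fun v : ℝ => v - b / v) (1 + b / v ^ 2) (Ioi 0) v := by
    intro v hv
    simp only [mem_Ioi] at hv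
    have h := (hasDerivAt_id v).sub ((hasDerivAt_inv hv.ne').const_mul b)
    have : HasDerivAt (fun v : ℝ => v - b / v) (1 + b / v ^ 2) v := by
      refine (h.congr_deriv (by ring)).congr_of_eventuallyEq ?_
      exact Filter.Eventually.of_forall (fun w => by simp [div_eq_mul_inv])
    exact this.hasDerivWithinAt
  have hinj1 : InjOn (fun v : ℝ => b / v) (Ioi 0) := by
    intro x hx y hy h
    simp only [mem_Ioi] at hx hy
    simp only at h
    rw [div_eq_div_iff hx.ne' hy.ne'] at h
    exact (mul_left_cancel₀ hb.ne' h).symm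
  have hgauss : ∫ u : ℝ, Real.exp (-u ^ 2 / 2) = Real.sqrt (2 * π) := by
    have h := integral_gaussian (1/2 : ℝ)
    rw [show (fun u : ℝ => Real.exp (-u ^ 2 / 2)) = fun u : ℝ => Real.exp (-(1/2) * u ^ 2) by
      funext u; ring_nf] at *
    rw [h, show π / (1/2 : ℝ) = 2 * π by ring]
  -- step B: ∫_{Ioi 0} (1+b/v²) g = √(2π)
  have hB : ∫ v in Ioi (0:ℝ), |1 + b / v ^ 2| • Real.exp (-(v - b / v) ^ 2 / 2)
      = Real.sqrt (2 * π) := by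
    rw [← integral_image_eq_integral_abs_deriv_smul measurableSet_Ioi hderiv2 (injOn_psi b hb)
      (fun u => Real.exp (-u ^ 2 / 2))]
    rw [image_psi b hb, setIntegral_univ, hgauss]
  -- integrability of (1+b/v²) g
  have hBint : IntegrableOn (fun v => |1 + b / v ^ 2| • g v) (Ioi 0) := by
    rw [← integrableOn_image_iff_integrableOn_abs_deriv_smul measurableSet_Ioi hderiv2
      (injOn_psi b hb) (fun u => Real.exp (-u ^ 2 / 2))]
    rw [image_psi b hb]
    rw [integrableOn_univ]
    have h := integrable_exp_neg_mul_sq (show (0:ℝ) < 1/2 by norm_num)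
    simpa [neg_div, div_eq_mul_inv, mul_comm, neg_mul] using h
  have hgm : AEStronglyMeasurable g (volume.restrict (Ioi 0)) :=
    (contOn_g b).aestronglyMeasurable measurableSet_Ioi
  have hg_nonneg : ∀ v, 0 ≤ g v := fun v => (Real.exp_pos _).le
  have hpos : ∀ v ∈ Ioi (0:ℝ), (0:ℝ) < 1 + b / v ^ 2 := by
    intro v hv; simp only [mem_Ioi] at hv; positivity
  -- integrability of g and (b/v²) g
  have hint_g : IntegrableOn g (Ioi 0) := by
    apply hBint.mono' hgm
    filter_upwards [ae_restrict_mem measurableSet_Ioi] with v hv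
    rw [Real.norm_of_nonneg (hg_nonneg v)]
    have h1 := (hpos v hv).le
    have : (1:ℝ) ≤ 1 + b / v ^ 2 := by
      have : (0:ℝ) ≤ b / v ^ 2 := by positivity
      linarith
    calc g v = 1 * g v := (one_mul _).symm
    _ ≤ (1 + b / v ^ 2) * g v := by
        apply mul_le_mul_of_nonneg_right this (hg_nonneg v)
    _ = |1 + b / v ^ 2| • g v := by rw [abs_of_pos (hpos v hv), smul_eq_mul]
  have hint_g2 : IntegrableOn (fun v => (b / v ^ 2) * g v) (Ioi 0) := by
    apply hBint.mono'
    · apply AEStronglyMeasurable.mul _ hgm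
      apply (ContinuousOn.aestronglyMeasurable _ measurableSet_Ioi)
      exact continuousOn_const.div (continuousOn_pow 2)
        (fun x hx => pow_ne_zero 2 (mem_Ioi.mp hx).ne')
    · filter_upwards [ae_restrict_mem measurableSet_Ioi] with v hv
      simp only [mem_Ioi] at hv
      have hb2 : (0:ℝ) ≤ b / v ^ 2 := by positivity
      rw [Real.norm_of_nonneg (mul_nonneg hb2 (hg_nonneg v))]
      calc (b / v ^ 2) * g v ≤ (1 + b / v ^ 2) * g v := by
            apply mul_le_mul_of_nonneg_right _ (hg_nonneg v); linarith
      _ = |1 + b / v ^ 2| • g v := by rw [abs_of_pos (hpos v (mem_Ioi.mpr hv)), smul_eq_mul]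
  -- step A : ∫ g = ∫ (b/v²) g
  have hA : ∫ v in Ioi (0:ℝ), g v = ∫ v in Ioi (0:ℝ), (b / v ^ 2) * g v := by
    conv_lhs => rw [← image_inv_mul b hb]
    rw [integral_image_eq_integral_abs_deriv_smul measurableSet_Ioi hderiv1 hinj1 g]
    apply setIntegral_congr_fun measurableSet_Ioi
    intro v hv
    simp only [mem_Ioi] at hv
    have hb2 : (0:ℝ) ≤ b / v ^ 2 := by positivity
    simp only [smul_eq_mul]
    rw [abs_neg, abs_of_nonneg hb2]
    congr 1
    have hbv : b / (b / v) = v := by field_simp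
    simp only [hg]
    rw [hbv, show b / v - v = -(v - b / v) by ring, neg_sq]
  -- combine
  have hsum : ∫ v in Ioi (0:ℝ), (g v + (b / v ^ 2) * g v)
      = (∫ v in Ioi (0:ℝ), g v) + ∫ v in Ioi (0:ℝ), (b / v ^ 2) * g v :=
    integral_add hint_g hint_g2
  have hsum2 : ∫ v in Ioi (0:ℝ), (g v + (b / v ^ 2) * g v) = Real.sqrt (2 * π) := by
    rw [← hB]
    apply setIntegral_congr_fun measurableSet_Ioi
    intro v hv
    simp only [smul_eq_mul, hg]
    rw [abs_of_pos (hpos v hv)]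
    ring
  have hJ : ∫ v in Ioi (0:ℝ), g v = Real.sqrt (2 * π) / 2 := by
    have h3 : Real.sqrt (2 * π)
        = (∫ v in Ioi (0:ℝ), g v) + ∫ v in Ioi (0:ℝ), (b / v ^ 2) * g v := by
      rw [← hsum, hsum2]
    rw [← hA] at h3
    linarith
  have hfinal : ∫ v in Ioi (0:ℝ), Real.exp (-v ^ 2 / 2 - b ^ 2 / (2 * v ^ 2))
      = Real.exp (-b) * ∫ v in Ioi (0:ℝ), g v := by
    rw [← integral_const_mul]
    apply setIntegral_congr_fun measurableSet_Ioi
    intro v hv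
    simp only [mem_Ioi] at hv
    simp only [hg]
    rw [← Real.exp_add]
    congr 1
    have h1 : (v - b / v) ^ 2 = v ^ 2 - 2 * b + b ^ 2 / v ^ 2 := by
      field_simp; ring
    rw [h1]
    field_simp
    ring
  rw [hfinal, hJ]
  have h2 : Real.sqrt (2 * π) = 2 * Real.sqrt (π / 2) := by
    rw [show 2 * π = 2 ^ 2 * (π / 2) by ring, Real.sqrt_mul (by positivity),
      Real.sqrt_sq (by norm_num)]
  rw [h2]
  ring

lemma sqrt_two_pi_eq : Real.sqrt (2 * π) = 2 * Real.sqrt (π / 2) := by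
  rw [show 2 * π = 2 ^ 2 * (π / 2) by ring, Real.sqrt_mul (by positivity),
    Real.sqrt_sq (by norm_num)]

lemma image_phi (a : ℝ) (ha : 0 < a) : (fun v : ℝ => a ^ 2 / v ^ 2) '' Ioi 0 = Ioi 0 := by
  ext t
  constructor
  · rintro ⟨v, hv, rfl⟩
    exact div_pos (by positivity) (pow_pos (mem_Ioi.mp hv) 2)
  · intro ht
    simp only [mem_Ioi] at ht
    refine ⟨a / Real.sqrt t, div_pos ha (Real.sqrt_pos.mpr ht), ?_⟩
    have hst : Real.sqrt t ^ 2 = t := Real.sq_sqrt ht.le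
    have hsne : Real.sqrt t ≠ 0 := (Real.sqrt_pos.mpr ht).ne'
    show a ^ 2 / (a / Real.sqrt t) ^ 2 = t
    rw [div_pow]
    rw [hst, div_div_eq_mul_div, mul_comm, mul_div_assoc, div_self (by positivity : (a:ℝ)^2 ≠ 0), mul_one]

lemma hasDeriv_phi (a : ℝ) : ∀ v ∈ Ioi (0:ℝ),
    HasDerivWithinAt (fun v : ℝ => a ^ 2 / v ^ 2) (-(2 * a ^ 2 / v ^ 3)) (Ioi 0) v := by
  intro v hv
  simp only [mem_Ioi] at hv
  have h := ((hasDerivAt_pow 2 v).inv (pow_ne_zero 2 hv.ne')).const_mul (a ^ 2)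
  have h2 : HasDerivAt (fun v : ℝ => a ^ 2 / v ^ 2) (-(2 * a ^ 2 / v ^ 3)) v := by
    have heq : (fun v : ℝ => a ^ 2 / v ^ 2) = fun v : ℝ => a ^ 2 * (v ^ 2)⁻¹ := by
      funext w; rw [div_eq_mul_inv]
    rw [heq]
    refine (h.congr_deriv ?_).congr_of_eventuallyEq (Filter.Eventually.of_forall fun w => by simp)
    push_cast
    have hv0 : v ≠ 0 := hv.ne'
    field_simp
  exact h2.hasDerivWithinAt

lemma injOn_phi (a : ℝ) (ha : 0 < a) : InjOn (fun v : ℝ => a ^ 2 / v ^ 2) (Ioi 0) := by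
  intro x hx y hy h
  simp only [mem_Ioi] at hx hy
  simp only at h
  have hx2 : x ^ 2 = y ^ 2 := by
    have h' : a ^ 2 / x ^ 2 * (x ^ 2 * y ^ 2) = a ^ 2 / y ^ 2 * (x ^ 2 * y ^ 2) := by rw [h]
    have e1 : a ^ 2 / x ^ 2 * (x ^ 2 * y ^ 2) = a ^ 2 * y ^ 2 := by field_simp
    have e2 : a ^ 2 / y ^ 2 * (x ^ 2 * y ^ 2) = a ^ 2 * x ^ 2 := by field_simp
    have h3 : a ^ 2 * y ^ 2 = a ^ 2 * x ^ 2 := by rw [← e1, h', e2]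
    exact (mul_left_cancel₀ (by positivity : (a:ℝ) ^ 2 ≠ 0) h3).symm
  have := congrArg Real.sqrt hx2
  rwa [Real.sqrt_sq hx.le, Real.sqrt_sq hy.le] at this

lemma rpow_32 (x : ℝ) (hx : 0 < x) : (x ^ 2 : ℝ) ^ ((3:ℝ)/2) = x ^ 3 := by
  rw [← Real.rpow_natCast x 2, ← Real.rpow_mul hx.le]
  norm_num

lemma laplace_aux (s a : ℝ) (hs : 0 < s) (ha : 0 < a) : ∀ v ∈ Ioi (0:ℝ),
    |(-(2 * a ^ 2 / v ^ 3))| •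
      (fun t => Real.exp (-s * t) * (a / (Real.sqrt (2 * π) * t ^ ((3:ℝ)/2))
        * Real.exp (-a ^ 2 / (2 * t)))) (a ^ 2 / v ^ 2)
    = (2 / Real.sqrt (2 * π))
        * Real.exp (-v ^ 2 / 2 - (a * Real.sqrt (2 * s)) ^ 2 / (2 * v ^ 2)) := by
  intro v hv
  simp only [mem_Ioi] at hv
  simp only [smul_eq_mul]
  have hb2 : (a * Real.sqrt (2 * s)) ^ 2 = 2 * s * a ^ 2 := by
    rw [mul_pow, Real.sq_sqrt (by positivity)]; ring
  have hav : (0:ℝ) < a / v := div_pos ha hv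
  have hr : (a ^ 2 / v ^ 2 : ℝ) ^ ((3:ℝ)/2) = (a / v) ^ 3 := by
    rw [show a ^ 2 / v ^ 2 = (a / v) ^ 2 by ring]
    exact rpow_32 _ hav
  rw [abs_neg, abs_of_nonneg (by positivity : (0:ℝ) ≤ 2 * a ^ 2 / v ^ 3), hr]
  have hexp1 : -s * (a ^ 2 / v ^ 2) = -(v ^ 2 / 2 + (a * Real.sqrt (2 * s)) ^ 2 / (2 * v ^ 2)) - (-(v ^ 2 / 2)) := by
    rw [hb2]; field_simp; ring
  have hexp2 : -a ^ 2 / (2 * (a ^ 2 / v ^ 2)) = -(v ^ 2) / 2 := by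
    rw [div_eq_div_iff (by positivity) (by norm_num)]
    field_simp
  rw [hexp1, hexp2]
  have hsq : Real.sqrt (2 * π) > 0 := Real.sqrt_pos.mpr (by positivity)
  have hE : Real.exp (-(v ^ 2 / 2 + (a * Real.sqrt (2 * s)) ^ 2 / (2 * v ^ 2)) - -(v ^ 2 / 2))
      * Real.exp (-(v ^ 2) / 2)
      = Real.exp (-v ^ 2 / 2 - (a * Real.sqrt (2 * s)) ^ 2 / (2 * v ^ 2)) := by
    rw [← Real.exp_add]
    congr 1
    ring
  have hconst : 2 * a ^ 2 / v ^ 3 * (a / (Real.sqrt (2 * π) * (a / v) ^ 3))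
      = 2 / Real.sqrt (2 * π) := by
    rw [div_pow]
    field_simp
  calc 2 * a ^ 2 / v ^ 3 *
        (Real.exp (-(v ^ 2 / 2 + (a * Real.sqrt (2 * s)) ^ 2 / (2 * v ^ 2)) - -(v ^ 2 / 2)) *
          (a / (Real.sqrt (2 * π) * (a / v) ^ 3) * Real.exp (-(v ^ 2) / 2)))
      = (2 * a ^ 2 / v ^ 3 * (a / (Real.sqrt (2 * π) * (a / v) ^ 3))) *
        (Real.exp (-(v ^ 2 / 2 + (a * Real.sqrt (2 * s)) ^ 2 / (2 * v ^ 2)) - -(v ^ 2 / 2)) *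
          Real.exp (-(v ^ 2) / 2)) := by ring
    _ = 2 / Real.sqrt (2 * π)
        * Real.exp (-v ^ 2 / 2 - (a * Real.sqrt (2 * s)) ^ 2 / (2 * v ^ 2)) := by
        rw [hconst, hE]

lemma nice_integrable (c : ℝ) :
    IntegrableOn (fun v : ℝ => (2 / Real.sqrt (2 * π))
      * Real.exp (-v ^ 2 / 2 - c ^ 2 / (2 * v ^ 2))) (Ioi 0) := by
  apply Integrable.const_mul
  have hgint : IntegrableOn (fun v : ℝ => Real.exp (-v ^ 2 / 2)) (Ioi 0) := by
    have h := integrable_exp_neg_mul_sq (show (0:ℝ) < 1/2 by norm_num)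
    have h2 : (fun v : ℝ => Real.exp (-v ^ 2 / 2)) = fun v : ℝ => Real.exp (-(1/2) * v ^ 2) := by
      funext v; ring_nf
    rw [h2]
    exact h.integrableOn
  apply hgint.mono'
  · apply (ContinuousOn.aestronglyMeasurable _ measurableSet_Ioi)
    apply Real.continuous_exp.comp_continuousOn
    apply ContinuousOn.sub
    · exact (continuousOn_pow 2).neg.div_const 2
    · exact continuousOn_const.div (continuousOn_const.mul (continuousOn_pow 2))
        (fun x hx => by
          have : (0:ℝ) < x := mem_Ioi.mp hx
          positivity)
  · filter_upwards [ae_restrict_mem measurableSet_Ioi] with v hv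
    simp only [mem_Ioi] at hv
    rw [Real.norm_of_nonneg (Real.exp_pos _).le]
    apply Real.exp_le_exp.mpr
    have : (0:ℝ) ≤ c ^ 2 / (2 * v ^ 2) := by positivity
    linarith

lemma laplace_term (s a : ℝ) (hs : 0 < s) (ha : 0 < a) :
    ∫ t in Ioi (0:ℝ), Real.exp (-s * t) * (a / (Real.sqrt (2 * π) * t ^ ((3:ℝ)/2))
        * Real.exp (-a ^ 2 / (2 * t)))
      = Real.exp (-(a * Real.sqrt (2 * s))) := by
  conv_lhs => rw [← image_phi a ha]
  rw [integral_image_eq_integral_abs_deriv_smul measurableSet_Ioi (hasDeriv_phi a) (injOn_phi a ha)]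
  rw [setIntegral_congr_fun measurableSet_Ioi (laplace_aux s a hs ha)]
  rw [integral_const_mul, glasser (a * Real.sqrt (2 * s)) (by positivity)]
  rw [sqrt_two_pi_eq]
  have h0 : Real.sqrt (π / 2) > 0 := Real.sqrt_pos.mpr (by positivity)
  field_simp

lemma laplace_term_integrable (s a : ℝ) (hs : 0 < s) (ha : 0 < a) :
    IntegrableOn (fun t => Real.exp (-s * t) * (a / (Real.sqrt (2 * π) * t ^ ((3:ℝ)/2))
        * Real.exp (-a ^ 2 / (2 * t)))) (Ioi 0) := by
  rw [← image_phi a ha]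
  rw [integrableOn_image_iff_integrableOn_abs_deriv_smul measurableSet_Ioi (hasDeriv_phi a)
    (injOn_phi a ha)]
  exact (nice_integrable (a * Real.sqrt (2 * s))).congr_fun
    (fun v hv => (laplace_aux s a hs ha v hv).symm) measurableSet_Ioi

/-- The series density of the circle cover time. -/
noncomputable def coverDensity (t : ℝ) : ℝ :=
  ∑' n : ℕ, 4 * (-1) ^ n * ((n : ℝ) + 1) ^ 2 / (Real.sqrt (2 * Real.pi) * t ^ ((3 : ℝ) / 2))
    * Real.exp (-((n : ℝ) + 1) ^ 2 / (2 * t))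

/-- The function `p t = ∑_{n≥0} 4 (-1)^n (n+1)² / (√(2π) t^{3/2}) exp (-(n+1)²/(2t))` has
Laplace transform `∫_0^∞ e^{-st} p t dt = 1 / cosh² √(s/2)` for all `s > 0`. -/
theorem stmt_12 (s : ℝ) (hs : 0 < s) :
    ∫ t in Set.Ioi (0 : ℝ), Real.exp (-s * t) * coverDensity t
      = 1 / (Real.cosh (Real.sqrt (s / 2))) ^ 2 := by
  have hr : 0 < Real.sqrt (2 * s) := Real.sqrt_pos.mpr (by positivity)
  set r := Real.sqrt (2 * s) with hrdef
  set x := Real.exp (-r) with hxdef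
  have hx0 : 0 < x := Real.exp_pos _
  have hx1 : x < 1 := by
    rw [hxdef]
    calc Real.exp (-r) < Real.exp 0 := Real.exp_lt_exp.mpr (by linarith)
    _ = 1 := Real.exp_zero
  set F : ℕ → ℝ → ℝ := fun n t =>
    Real.exp (-s * t) * (4 * (-1) ^ n * ((n : ℝ) + 1) ^ 2
      / (Real.sqrt (2 * π) * t ^ ((3 : ℝ) / 2)) * Real.exp (-((n : ℝ) + 1) ^ 2 / (2 * t)))
    with hFdef
  set G : ℕ → ℝ → ℝ := fun n t =>
    Real.exp (-s * t) * (((n : ℝ) + 1) / (Real.sqrt (2 * π) * t ^ ((3 : ℝ) / 2))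
      * Real.exp (-((n : ℝ) + 1) ^ 2 / (2 * t))) with hGdef
  have ha : ∀ n : ℕ, (0:ℝ) < (n : ℝ) + 1 := fun n => by positivity
  have hFG : ∀ n t, F n t = (4 * (-1) ^ n * ((n : ℝ) + 1)) * G n t := by
    intro n t
    simp only [hFdef, hGdef]
    ring
  have hGnonneg : ∀ n, ∀ t ∈ Set.Ioi (0:ℝ), 0 ≤ G n t := by
    intro n t ht
    simp only [Set.mem_Ioi] at ht
    have h32 : (0:ℝ) < t ^ ((3:ℝ)/2) := Real.rpow_pos_of_pos ht _
    simp only [hGdef]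
    positivity
  have hGint : ∀ n, IntegrableOn (G n) (Set.Ioi 0) :=
    fun n => laplace_term_integrable s _ hs (ha n)
  have hGval : ∀ n, ∫ t in Set.Ioi (0:ℝ), G n t = Real.exp (-(((n:ℝ)+1) * r)) :=
    fun n => laplace_term s _ hs (ha n)
  have hFint : ∀ n, Integrable (F n) (volume.restrict (Set.Ioi 0)) := by
    intro n
    have := (hGint n).const_mul (4 * (-1) ^ n * ((n : ℝ) + 1))
    exact this.congr (Filter.Eventually.of_forall fun t => (hFG n t).symm)
  have hxpow : ∀ n : ℕ, Real.exp (-(((n:ℝ)+1) * r)) = x ^ (n + 1) := by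
    intro n
    rw [hxdef, ← Real.exp_nat_mul]
    congr 1
    push_cast
    ring
  have hFnormint : ∀ n, ∫ t in Set.Ioi (0:ℝ), ‖F n t‖ = 4 * ((n:ℝ)+1) * x ^ (n+1) := by
    intro n
    have heq : ∀ t ∈ Set.Ioi (0:ℝ), ‖F n t‖ = (4 * ((n:ℝ)+1)) * G n t := by
      intro t ht
      rw [hFG n t, norm_mul, Real.norm_of_nonneg (hGnonneg n t ht)]
      congr 1
      rw [Real.norm_eq_abs, abs_mul, abs_mul]
      simp [abs_of_nonneg (ha n).le, abs_pow]
    rw [setIntegral_congr_fun measurableSet_Ioi heq, integral_const_mul, hGval, hxpow]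
  have hsummand : Summable (fun n : ℕ => 4 * ((n:ℝ)+1) * x ^ (n+1)) := by
    have h1 : Summable (fun n : ℕ => (n:ℝ) * x ^ n) := by
      have := summable_pow_mul_geometric_of_norm_lt_one (R := ℝ) 1
        (by rw [Real.norm_of_nonneg hx0.le]; exact hx1)
      simpa [pow_one] using this
    have h2 : Summable (fun n : ℕ => x ^ n) := summable_geometric_of_lt_one hx0.le hx1
    have h3 := (h1.mul_left (4*x)).add (h2.mul_left (4*x))
    apply h3.congr
    intro n
    rw [pow_succ]
    ring
  have hswap := integral_tsum_of_summable_integral_norm (μ := volume.restrict (Set.Ioi 0))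
    hFint (by simpa only [hFnormint] using hsummand)
  have hpt : ∀ t : ℝ, Real.exp (-s * t) * coverDensity t = ∑' n, F n t := by
    intro t
    rw [coverDensity]
    exact (tsum_mul_left).symm
  have hterm : ∀ n : ℕ, ∫ t in Set.Ioi (0:ℝ), F n t
      = -4 * ((((n+1:ℕ)):ℝ) * (-x) ^ (n+1)) := by
    intro n
    have : (fun t => F n t) = fun t => (4 * (-1) ^ n * ((n : ℝ) + 1)) * G n t := by
      funext t; exact hFG n t
    rw [this, integral_const_mul, hGval, hxpow]
    push_cast
    rw [neg_pow]
    ring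
  have hyS : Summable (fun m : ℕ => (m:ℝ) * (-x) ^ m) := by
    have := summable_pow_mul_geometric_of_norm_lt_one (R := ℝ) 1
      (r := -x) (by rw [norm_neg, Real.norm_of_nonneg hx0.le]; exact hx1)
    simpa [pow_one] using this
  have hshift : ∑' n : ℕ, (((n+1:ℕ)):ℝ) * (-x) ^ (n+1) = (-x) / (1 - (-x)) ^ 2 := by
    have h0 := hyS.tsum_eq_zero_add
    simp only [Nat.cast_zero, zero_mul, zero_add] at h0
    rw [← h0, tsum_coe_mul_geometric_of_norm_lt_one
      (by rw [norm_neg, Real.norm_of_nonneg hx0.le]; exact hx1)]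
  calc ∫ t in Set.Ioi (0:ℝ), Real.exp (-s * t) * coverDensity t
      = ∫ t in Set.Ioi (0:ℝ), ∑' n, F n t :=
        setIntegral_congr_fun measurableSet_Ioi (fun t _ => hpt t)
    _ = ∑' n, ∫ t in Set.Ioi (0:ℝ), F n t := hswap.symm
    _ = ∑' n : ℕ, -4 * ((((n+1:ℕ)):ℝ) * (-x) ^ (n+1)) := by
        exact tsum_congr hterm
    _ = -4 * ∑' n : ℕ, (((n+1:ℕ)):ℝ) * (-x) ^ (n+1) := tsum_mul_left
    _ = 4 * x / (1 + x) ^ 2 := by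
        rw [hshift]
        rw [show (1 - (-x)) = 1 + x by ring]
        ring
    _ = 1 / (Real.cosh (Real.sqrt (s / 2))) ^ 2 := by
        set u := Real.sqrt (s / 2) with hudef
        have hru : r = 2 * u := by
          rw [hrdef, hudef, show 2 * s = 2 ^ 2 * (s / 2) by ring,
            Real.sqrt_mul (by positivity), Real.sqrt_sq (by norm_num)]
        have hx2 : x = Real.exp (-u) ^ 2 := by
          rw [hxdef, hru, show -(2*u) = -u + -u by ring, Real.exp_add]
          ring
        have hprod : Real.exp u * Real.exp (-u) = 1 := by
          rw [← Real.exp_add]; simp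
        rw [hx2, Real.cosh_eq]
        have hE : (0:ℝ) < Real.exp (-u) := Real.exp_pos _
        have hden : (0:ℝ) < 1 + Real.exp (-u) ^ 2 := by positivity
        field_simp
        nlinarith [hprod, hE]
end

section
/- ∫_0^∞ Σ_{n=0}^∞ 4(-1)^n (n+1)²/(√(2π) t^{3/2}) · exp(-(n+1)²/(2t)) dt = 1, i.e., p is a probability density on (0, ∞). -/
open Real MeasureTheory

namespace CoverAux

open Set Filter HurwitzZeta

/-! ### Summability helpers -/

lemma summable_pow_exp (k : ℕ) {c : ℝ} (hc : 0 < c) {α : ℝ} (hα : 1/2 ≤ α) :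
    Summable (fun n : ℕ => ((n : ℝ) + 1) ^ k * Real.exp (-(c * ((n : ℝ) + α) ^ 2))) := by
  have hr : ‖Real.exp (-c)‖ < 1 := by
    rw [Real.norm_eq_abs, abs_of_pos (Real.exp_pos _)]
    exact Real.exp_lt_one_iff.mpr (by linarith)
  have h0 : Summable (fun n : ℕ => ((n : ℝ)) ^ k * (Real.exp (-c)) ^ n) :=
    summable_pow_mul_geometric_of_norm_lt_one k hr
  have h1 : Summable (fun n : ℕ => ((n : ℝ) + 1) ^ k * (Real.exp (-c)) ^ n) := by
    have h2 := (summable_nat_add_iff 1).mpr h0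
    have h3 := h2.mul_left ((Real.exp (-c))⁻¹)
    refine h3.congr fun n => ?_
    have : Real.exp (-c) ≠ 0 := (Real.exp_pos _).ne'
    push_cast
    rw [pow_succ]
    field_simp
  refine Summable.of_nonneg_of_le (fun n => by positivity) (fun n => ?_) h1
  rw [← Real.exp_nat_mul]
  gcongr ((n:ℝ)+1)^k * ?_
  rw [Real.exp_le_exp]
  have hn : (n : ℝ) ≤ ((n : ℝ) + α) ^ 2 := by nlinarith [sq_nonneg ((n:ℝ) + α - 1/2)]
  nlinarith

/-! ### Theta-type series and their functional equation -/

noncomputable def Phi (x : ℝ) : ℝ := ∑' n : ℕ, 2 * Real.exp (-(π * ((n : ℝ) + 1/2) ^ 2 / x))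

noncomputable def Psi (x : ℝ) : ℝ :=
  ∑' n : ℕ, 2 * (-1 : ℝ) ^ (n + 1) * Real.exp (-(π * ((n : ℝ) + 1) ^ 2 * x))

noncomputable def Phi' (x : ℝ) : ℝ :=
  ∑' n : ℕ, 2 * (π * ((n : ℝ) + 1/2) ^ 2 / x ^ 2) * Real.exp (-(π * ((n : ℝ) + 1/2) ^ 2 / x))

noncomputable def Psi' (x : ℝ) : ℝ :=
  ∑' n : ℕ, 2 * (-1 : ℝ) ^ n * (π * ((n : ℝ) + 1) ^ 2) * Real.exp (-(π * ((n : ℝ) + 1) ^ 2 * x))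

lemma hasSum_Phi {x : ℝ} (hx : 0 < x) :
    HasSum (fun n : ℕ => 2 * Real.exp (-(π * ((n : ℝ) + 1/2) ^ 2 / x)))
      (evenKernel (↑(1/2 : ℝ)) x⁻¹) := by
  have h := (hasSum_int_evenKernel (1/2 : ℝ) (t := x⁻¹) (by positivity)).nat_add_neg_add_one
  refine h.congr_fun fun n => ?_
  have h1 : (((-((n : ℤ) + 1)) : ℤ) : ℝ) + 1/2 = -(((n : ℝ)) + 1/2) := by push_cast; ring
  have h2 : (((n : ℤ) : ℝ)) + 1/2 = (n : ℝ) + 1/2 := by push_cast; ring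
  rw [h1, h2, neg_sq]
  rw [← two_mul]
  congr 1
  ring

lemma hasSum_Psi {x : ℝ} (hx : 0 < x) :
    HasSum (fun n : ℕ => 2 * (-1 : ℝ) ^ (n + 1) * Real.exp (-(π * ((n : ℝ) + 1) ^ 2 * x)))
      (cosKernel (↑(1/2 : ℝ)) x - 1) := by
  have h := hasSum_nat_cosKernel₀ (1/2 : ℝ) hx
  refine h.congr_fun fun n => ?_
  have : (2 * π * (1/2) * ((n : ℝ) + 1)) = 0 + ((n : ℕ) + 1 : ℕ) * π := by push_cast; ring
  rw [this, Real.cos_add_nat_mul_pi, Real.cos_zero]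
  push_cast
  ring_nf

lemma Phi_eq {x : ℝ} (hx : 0 < x) : Phi x = evenKernel (↑(1/2 : ℝ)) x⁻¹ :=
  (hasSum_Phi hx).tsum_eq

lemma Psi_eq {x : ℝ} (hx : 0 < x) : Psi x = cosKernel (↑(1/2 : ℝ)) x - 1 :=
  (hasSum_Psi hx).tsum_eq

/-- Functional equation in real form. -/
lemma FE {x : ℝ} (hx : 0 < x) : Phi x = x ^ (1/2 : ℝ) * (1 + Psi x) := by
  rw [Phi_eq hx, Psi_eq hx, evenKernel_functional_equation]
  rw [one_div x⁻¹, inv_inv, one_div, Real.inv_rpow hx.le, inv_inv]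
  ring

lemma summable_Phi {x : ℝ} (hx : 0 < x) :
    Summable (fun n : ℕ => 2 * Real.exp (-(π * ((n : ℝ) + 1/2) ^ 2 / x))) := by
  have h := (summable_pow_exp 0 (c := π / x) (by positivity) (le_refl (1/2 : ℝ))).mul_left 2
  refine h.congr fun n => ?_
  rw [pow_zero, one_mul]
  congr 2
  ring

lemma summable_Psi {x : ℝ} (hx : 0 < x) :
    Summable (fun n : ℕ => 2 * (-1 : ℝ) ^ (n + 1) * Real.exp (-(π * ((n : ℝ) + 1) ^ 2 * x))) := by
  apply Summable.of_norm
  have h := (summable_pow_exp 0 (c := π * x) (by positivity) (α := 1) (by norm_num)).mul_left 2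
  refine h.congr fun n => ?_
  rw [pow_zero, one_mul, norm_mul, norm_mul, norm_pow, norm_neg, norm_one, one_pow, mul_one,
    Real.norm_eq_abs, Real.norm_eq_abs, Real.abs_exp, abs_two]
  congr 2
  ring

/-! ### Termwise differentiation -/

lemma hasDerivAt_Phi {x : ℝ} (hx : 0 < x) : HasDerivAt Phi (Phi' x) x := by
  set f : ℕ → ℝ → ℝ := fun n y => 2 * Real.exp (-(π * ((n : ℝ) + 1/2) ^ 2 / y)) with hf
  set f' : ℕ → ℝ → ℝ :=
    fun n y => 2 * (π * ((n : ℝ) + 1/2) ^ 2 / y ^ 2) * Real.exp (-(π * ((n : ℝ) + 1/2) ^ 2 / y))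
    with hf'
  set u : ℕ → ℝ :=
    fun n => (8 * π / x ^ 2) * (((n:ℝ)+1)^2 * Real.exp (-(π / (2*x) * ((n:ℝ)+1/2)^2))) with hu'
  have hxs : x ∈ Ioo (x/2) (2*x) := ⟨by linarith, by linarith⟩
  have hu : Summable u :=
    (summable_pow_exp 2 (by positivity) (le_refl (1/2:ℝ))).mul_left _
  have hg : ∀ (n : ℕ) (y : ℝ), y ∈ Ioo (x/2) (2*x) → HasDerivAt (f n) (f' n y) y := by
    intro n y hy
    have hy0 : (0:ℝ) < y := lt_trans (by linarith) hy.1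
    have h1 : HasDerivAt (fun z : ℝ => -(π * ((n : ℝ) + 1/2) ^ 2 / z))
        (π * ((n : ℝ) + 1/2) ^ 2 / y ^ 2) y := by
      have h2 := ((hasDerivAt_inv hy0.ne').const_mul (π * ((n : ℝ) + 1/2) ^ 2)).neg
      refine h2.congr_deriv ?_
      rw [mul_neg, neg_neg, ← div_eq_mul_inv]
    have h3 := (h1.exp).const_mul 2
    rw [hf, hf']
    refine h3.congr_deriv ?_
    ring
  have hg' : ∀ (n : ℕ) (y : ℝ), y ∈ Ioo (x/2) (2*x) → ‖f' n y‖ ≤ u n := by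
    intro n y hy
    have hy1 : x / 2 < y := hy.1
    have hy2 : y < 2 * x := hy.2
    have hy0 : (0:ℝ) < y := lt_trans (by linarith) hy1
    rw [hf', hu', Real.norm_eq_abs, abs_mul, abs_mul,
      Real.abs_exp, abs_two, abs_of_pos (by positivity :
      (0:ℝ) < π * ((n : ℝ) + 1/2) ^ 2 / y ^ 2)]
    have e1 : Real.exp (-(π * ((n : ℝ) + 1/2) ^ 2 / y)) ≤
        Real.exp (-(π / (2*x) * ((n:ℝ)+1/2)^2)) := by
      rw [Real.exp_le_exp, neg_le_neg_iff, div_mul_eq_mul_div,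
        div_le_div_iff₀ (by positivity) hy0]
      exact mul_le_mul_of_nonneg_left hy2.le (by positivity)
    have e2 : π * ((n : ℝ) + 1/2) ^ 2 / y ^ 2 ≤ 4 * π * ((n:ℝ)+1)^2 / x ^ 2 := by
      rw [div_le_div_iff₀ (by positivity) (by positivity)]
      have hxy : x^2 ≤ 4*y^2 := by nlinarith
      have hcn : ((n:ℝ)+1/2)^2 ≤ ((n:ℝ)+1)^2 := by
        have : (0:ℝ) ≤ (n:ℝ) := Nat.cast_nonneg n
        nlinarith
      have key := mul_le_mul_of_nonneg_left
        (mul_le_mul hcn hxy (sq_nonneg x) (by positivity)) pi_pos.le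
      nlinarith [key]
    calc 2 * (π * ((n : ℝ) + 1/2) ^ 2 / y ^ 2) * Real.exp (-(π * ((n : ℝ) + 1/2) ^ 2 / y))
        ≤ 2 * (4 * π * ((n:ℝ)+1)^2 / x ^ 2) * Real.exp (-(π / (2*x) * ((n:ℝ)+1/2)^2)) := by
          apply mul_le_mul (by linarith [e2]) e1 (Real.exp_pos _).le (by positivity)
      _ = (8 * π / x ^ 2) * (((n:ℝ)+1)^2 * Real.exp (-(π / (2*x) * ((n:ℝ)+1/2)^2))) := by ring
  have h0 : Summable fun n => f n x := summable_Phi hx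
  have key : HasDerivAt (fun y : ℝ => ∑' n : ℕ, f n y) (∑' n : ℕ, f' n x) x :=
    hasDerivAt_tsum_of_isPreconnected hu isOpen_Ioo (convex_Ioo _ _).isPreconnected
      hg hg' hxs h0 hxs
  exact key

lemma hasDerivAt_Psi {x : ℝ} (hx : 0 < x) : HasDerivAt Psi (Psi' x) x := by
  set f : ℕ → ℝ → ℝ :=
    fun n y => 2 * (-1 : ℝ) ^ (n + 1) * Real.exp (-(π * ((n : ℝ) + 1) ^ 2 * y)) with hf
  set f' : ℕ → ℝ → ℝ :=
    fun n y => 2 * (-1 : ℝ) ^ n * (π * ((n : ℝ) + 1) ^ 2) * Real.exp (-(π * ((n : ℝ) + 1) ^ 2 * y))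
    with hf'
  set u : ℕ → ℝ :=
    fun n => (2 * π) * (((n:ℝ)+1)^2 * Real.exp (-(x/2 * ((n:ℝ)+1)^2))) with hu'
  have hxs : x ∈ Ioo (x/2) (2*x) := ⟨by linarith, by linarith⟩
  have hu : Summable u :=
    (summable_pow_exp 2 (by positivity) (α := 1) (by norm_num)).mul_left _
  have hg : ∀ (n : ℕ) (y : ℝ), y ∈ Ioo (x/2) (2*x) → HasDerivAt (f n) (f' n y) y := by
    intro n y hy
    have h1 : HasDerivAt (fun z : ℝ => -(π * ((n : ℝ) + 1) ^ 2 * z))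
        (-(π * ((n : ℝ) + 1) ^ 2)) y := by
      simpa using (hasDerivAt_id y).const_mul (-(π * ((n : ℝ) + 1) ^ 2))
    have h3 := (h1.exp).const_mul (2 * (-1 : ℝ) ^ (n + 1))
    rw [hf, hf']
    refine h3.congr_deriv ?_
    rw [pow_succ]
    ring
  have hg' : ∀ (n : ℕ) (y : ℝ), y ∈ Ioo (x/2) (2*x) → ‖f' n y‖ ≤ u n := by
    intro n y hy
    have hy1 : x / 2 < y := hy.1
    rw [hf', hu', Real.norm_eq_abs, abs_mul, abs_mul, abs_mul, abs_pow, abs_neg, abs_one,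
      one_pow, mul_one, Real.abs_exp, abs_two,
      abs_of_pos (by positivity : (0:ℝ) < π * ((n:ℝ)+1)^2)]
    have e1 : Real.exp (-(π * ((n : ℝ) + 1) ^ 2 * y)) ≤ Real.exp (-(x/2 * ((n:ℝ)+1)^2)) := by
      rw [Real.exp_le_exp, neg_le_neg_iff]
      have hy0 : (0:ℝ) < y := lt_trans (by linarith) hy1
      have A : (0:ℝ) ≤ ((n:ℝ)+1)^2 * (y - x/2) := mul_nonneg (by positivity) (by linarith)
      have B : (0:ℝ) ≤ (π - 1) * (((n:ℝ)+1)^2 * y) :=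
        mul_nonneg (by linarith [Real.pi_gt_three]) (mul_nonneg (by positivity) hy0.le)
      nlinarith [A, B]
    calc 2 * (π * ((n : ℝ) + 1) ^ 2) * Real.exp (-(π * ((n : ℝ) + 1) ^ 2 * y))
        ≤ 2 * (π * ((n : ℝ) + 1) ^ 2) * Real.exp (-(x/2 * ((n:ℝ)+1)^2)) := by
          apply mul_le_mul_of_nonneg_left e1 (by positivity)
      _ = (2 * π) * (((n:ℝ)+1)^2 * Real.exp (-(x/2 * ((n:ℝ)+1)^2))) := by ring
  have h0 : Summable fun n => f n x := summable_Psi hx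
  have key : HasDerivAt (fun y : ℝ => ∑' n : ℕ, f n y) (∑' n : ℕ, f' n x) x :=
    hasDerivAt_tsum_of_isPreconnected hu isOpen_Ioo (convex_Ioo _ _).isPreconnected
      hg hg' hxs h0 hxs
  exact key

/-! ### The dual representation of the density -/

noncomputable def bb (n : ℕ) : ℝ := 2 * π ^ 2 * ((n : ℝ) + 1/2) ^ 2

lemma bb_pos (n : ℕ) : 0 < bb n := by
  have : (0:ℝ) < (n : ℝ) + 1/2 := by positivity
  unfold bb
  positivity

lemma summable_S0 {t : ℝ} (ht : 0 < t) : Summable (fun n : ℕ => Real.exp (-(bb n * t))) := by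
  have h := summable_pow_exp 0 (c := 2 * π ^ 2 * t) (by positivity) (le_refl (1/2:ℝ))
  refine h.congr fun n => ?_
  rw [pow_zero, one_mul]
  congr 1
  unfold bb
  ring

lemma summable_S1 {t : ℝ} (ht : 0 < t) :
    Summable (fun n : ℕ => bb n * Real.exp (-(bb n * t))) := by
  have h := (summable_pow_exp 2 (c := 2 * π ^ 2 * t) (by positivity)
    (le_refl (1/2:ℝ))).mul_left (2 * π ^ 2)
  refine Summable.of_nonneg_of_le
    (fun n => mul_nonneg (bb_pos n).le (Real.exp_pos _).le) (fun n => ?_) h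
  have h1 : bb n ≤ 2 * π ^ 2 * ((n:ℝ)+1)^2 := by
    unfold bb
    have : (0:ℝ) ≤ (n:ℝ) := Nat.cast_nonneg n
    nlinarith [pi_pos]
  have h2 : Real.exp (-(bb n * t)) = Real.exp (-(2 * π ^ 2 * t * ((n:ℝ)+1/2)^2)) := by
    congr 1
    unfold bb
    ring
  rw [h2]
  calc bb n * Real.exp (-(2 * π ^ 2 * t * ((n:ℝ)+1/2)^2))
      ≤ 2 * π ^ 2 * ((n:ℝ)+1)^2 * Real.exp (-(2 * π ^ 2 * t * ((n:ℝ)+1/2)^2)) := by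
        apply mul_le_mul_of_nonneg_right h1 (Real.exp_pos _).le
    _ = 2 * π ^ 2 * (((n:ℝ)+1)^2 * Real.exp (-(2 * π ^ 2 * t * ((n:ℝ)+1/2)^2))) := by ring

lemma p_eq {t : ℝ} (ht : 0 < t) :
    (∑' n : ℕ, 4 * (-1 : ℝ) ^ n * ((n : ℝ) + 1) ^ 2
      / (Real.sqrt (2 * π) * t ^ ((3 : ℝ) / 2)) * Real.exp (-((n : ℝ) + 1) ^ 2 / (2 * t)))
    = ∑' n : ℕ, (8 * bb n * t - 4) * Real.exp (-(bb n * t)) := by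
  set x : ℝ := (2 * π * t)⁻¹ with hxdef
  have hx : 0 < x := by positivity
  set S0 : ℝ := ∑' n : ℕ, Real.exp (-(bb n * t)) with hS0
  set S1 : ℝ := ∑' n : ℕ, bb n * Real.exp (-(bb n * t)) with hS1
  set H : ℝ := ∑' n : ℕ, (-1 : ℝ) ^ n * (((n : ℝ) + 1) ^ 2 *
    Real.exp (-((n : ℝ) + 1) ^ 2 / (2 * t))) with hH
  have hxinv : x⁻¹ = 2 * π * t := by rw [hxdef, inv_inv]
  have hexp1 : ∀ n : ℕ, -(π * ((n : ℝ) + 1/2) ^ 2 / x) = -(bb n * t) := by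
    intro n
    rw [div_eq_mul_inv, hxinv]
    unfold bb
    ring
  have hexp2 : ∀ n : ℕ, -(π * ((n : ℝ) + 1) ^ 2 * x) = -((n : ℝ) + 1) ^ 2 / (2 * t) := by
    intro n
    rw [hxdef]
    field_simp
  have hPhi : Phi x = 2 * S0 := by
    unfold Phi
    rw [hS0, ← tsum_mul_left]
    exact tsum_congr fun n => by rw [hexp1 n]
  have hPhi' : Phi' x = 4 * π * t ^ 2 * S1 := by
    unfold Phi'
    rw [hS1, ← tsum_mul_left]
    refine tsum_congr fun n => ?_
    rw [hexp1 n]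
    have hkey2 : (2 : ℝ) * (π * ((n : ℝ) + 1/2) ^ 2 / x ^ 2) = 4 * π * t ^ 2 * bb n := by
      rw [div_eq_mul_inv, hxdef, ← inv_pow, inv_inv]
      unfold bb
      ring
    rw [hkey2]
    ring
  have hPsi' : Psi' x = 2 * π * H := by
    unfold Psi'
    rw [hH, ← tsum_mul_left]
    refine tsum_congr fun n => ?_
    rw [hexp2 n]
    ring
  have hD2 : HasDerivAt (fun y : ℝ => y ^ (1/2 : ℝ) * (1 + Psi y))
      ((1/2) * x ^ ((1/2 : ℝ) - 1) * (1 + Psi x) + x ^ (1/2 : ℝ) * Psi' x) x :=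
    (Real.hasDerivAt_rpow_const (p := (1/2 : ℝ)) (Or.inl hx.ne')).mul
      ((hasDerivAt_Psi hx).const_add 1)
  have heq : Phi =ᶠ[nhds x] (fun y : ℝ => y ^ (1/2 : ℝ) * (1 + Psi y)) :=
    eventually_of_mem (Ioi_mem_nhds hx) (fun y hy => FE hy)
  have hD2' : HasDerivAt Phi
      ((1/2) * x ^ ((1/2 : ℝ) - 1) * (1 + Psi x) + x ^ (1/2 : ℝ) * Psi' x) x :=
    hD2.congr_of_eventuallyEq heq
  have hkey : Phi' x = (1/2) * x ^ ((1/2 : ℝ) - 1) * (1 + Psi x) + x ^ (1/2 : ℝ) * Psi' x :=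
    (hasDerivAt_Phi hx).unique hD2'
  set a : ℝ := t ^ (1/2 : ℝ) with hadef
  set s : ℝ := Real.sqrt (2 * π) with hsdef
  set q : ℝ := x ^ (1/2 : ℝ) with hqdef
  have ha : 0 < a := Real.rpow_pos_of_pos ht _
  have hs : 0 < s := Real.sqrt_pos.mpr (by positivity)
  have hq : 0 < q := Real.rpow_pos_of_pos hx _
  have hqsa : q * (s * a) = 1 := by
    rw [hsdef, Real.sqrt_eq_rpow, hadef, hqdef, ← Real.mul_rpow (by positivity) ht.le,
      ← Real.mul_rpow hx.le (by positivity), hxdef]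
    rw [show (2 * π * t)⁻¹ * (2 * π * t) = 1 by field_simp]
    exact Real.one_rpow _
  have hx12 : x ^ ((1/2 : ℝ) - 1) = q * (2 * π * t) := by
    rw [Real.rpow_sub hx, Real.rpow_one, hqdef, ← hxinv]
    field_simp
  have ht32 : t ^ ((3:ℝ)/2) = a * t := by
    rw [hadef, show (3:ℝ)/2 = 1/2 + 1 by norm_num, Real.rpow_add ht, Real.rpow_one]
  have E1 : 2 * S0 = q * (1 + Psi x) := by rw [hqdef, ← hPhi]; exact FE hx
  have E2 : 4 * π * t ^ 2 * S1 = (1/2) * (q * (2 * π * t)) * (1 + Psi x) + q * (2 * π * H) := by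
    rw [← hx12, ← hPsi', ← hPhi']
    exact hkey
  have E3p : 2 * π * (q * H) = 2 * π * (2 * t ^ 2 * S1 - t * S0) := by
    linear_combination (π * t) * E1 - E2
  have E3 : q * H = 2 * t ^ 2 * S1 - t * S0 :=
    mul_left_cancel₀ (by positivity : (0:ℝ) < 2 * π).ne' E3p
  have hLHS : (∑' n : ℕ, 4 * (-1 : ℝ) ^ n * ((n : ℝ) + 1) ^ 2
      / (Real.sqrt (2 * π) * t ^ ((3 : ℝ) / 2)) * Real.exp (-((n : ℝ) + 1) ^ 2 / (2 * t)))
      = (4 / (s * (a * t))) * H := by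
    rw [hH, ← tsum_mul_left]
    refine tsum_congr fun n => ?_
    rw [← hsdef, ht32]
    ring
  have hRHS : (∑' n : ℕ, (8 * bb n * t - 4) * Real.exp (-(bb n * t)))
      = 8 * t * S1 - 4 * S0 := by
    rw [hS1, hS0, ← tsum_mul_left, ← tsum_mul_left, ← Summable.tsum_sub
      ((summable_S1 ht).mul_left _) ((summable_S0 ht).mul_left _)]
    refine tsum_congr fun n => ?_
    ring
  rw [hLHS, hRHS]
  have hsa : s * a = q⁻¹ := eq_inv_of_mul_eq_one_right hqsa
  have hC : 4 / (s * (a * t)) = 4 * q / t := by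
    rw [show s * (a * t) = (s * a) * t by ring, hsa]
    field_simp
  rw [hC]
  field_simp
  linear_combination 4 * E3

/-! ### Integrals -/

lemma integral_exp_Ioi {r : ℝ} (hr : 0 < r) :
    ∫ t in Ioi (0:ℝ), Real.exp (-(r * t)) = 1 / r := by
  have h := Real.integral_rpow_mul_exp_neg_mul_Ioi (a := 1) one_pos hr
  simp only [sub_self, Real.rpow_zero, one_mul, Real.Gamma_one, Real.rpow_one, mul_one] at h
  exact h

lemma integral_texp_Ioi {r : ℝ} (hr : 0 < r) :
    ∫ t in Ioi (0:ℝ), t * Real.exp (-(r * t)) = 1 / r ^ 2 := by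
  have h := Real.integral_rpow_mul_exp_neg_mul_Ioi (a := 2) two_pos hr
  have h2 : Real.Gamma 2 = 1 := by
    rw [show (2:ℝ) = (1:ℕ) + 1 by norm_num, Real.Gamma_nat_eq_factorial]
    simp
  rw [h2, mul_one] at h
  rw [show (2:ℝ) - 1 = 1 by norm_num] at h
  simp only [Real.rpow_one] at h
  rw [h, show (2:ℝ) = ((2:ℕ):ℝ) by norm_num, Real.rpow_natCast, div_pow, one_pow]

lemma integrableOn_exp_r {r : ℝ} (hr : 0 < r) :
    IntegrableOn (fun t : ℝ => Real.exp (-(r * t))) (Ioi 0) := by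
  have h := exp_neg_integrableOn_Ioi 0 hr
  refine h.congr_fun (fun t _ => by simp only [neg_mul]) measurableSet_Ioi

lemma texp_le {r t : ℝ} (hr : 0 < r) (ht : 0 ≤ t) :
    t * Real.exp (-(r * t)) ≤ (2 / r) * Real.exp (-(r / 2 * t)) := by
  have hkey : (r / 2 * t) ≤ Real.exp (r / 2 * t) := by
    have := Real.add_one_le_exp (r / 2 * t)
    linarith
  have h1 : t * Real.exp (-(r * t)) = (t * Real.exp (-(r/2 * t))) * Real.exp (-(r/2 * t)) := by
    rw [mul_assoc, ← Real.exp_add]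
    congr 2
    ring
  have h2 : t * Real.exp (-(r/2 * t)) ≤ 2 / r := by
    rw [Real.exp_neg, mul_inv_le_iff₀ (Real.exp_pos _)]
    calc t = 2/r * (r/2*t) := by field_simp
      _ ≤ 2/r * Real.exp (r/2*t) :=
        mul_le_mul_of_nonneg_left hkey (by positivity)
  calc t * Real.exp (-(r * t)) = (t * Real.exp (-(r/2 * t))) * Real.exp (-(r/2 * t)) := h1
    _ ≤ (2/r) * Real.exp (-(r/2 * t)) :=
        mul_le_mul_of_nonneg_right h2 (Real.exp_pos _).le

lemma integrableOn_texp {r : ℝ} (hr : 0 < r) :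
    IntegrableOn (fun t : ℝ => t * Real.exp (-(r * t))) (Ioi 0) := by
  refine Integrable.mono' ((integrableOn_exp_r (half_pos hr)).const_mul (2/r))
    ?_ ?_
  · exact (continuous_id.mul (Real.continuous_exp.comp (by fun_prop))).aestronglyMeasurable
  · filter_upwards [ae_restrict_mem measurableSet_Ioi] with t ht
    rw [Real.norm_eq_abs, abs_of_nonneg (mul_nonneg (le_of_lt (mem_Ioi.mp ht))
      (Real.exp_pos _).le)]
    exact texp_le hr (le_of_lt ht)

lemma integrableOn_F (n : ℕ) :
    IntegrableOn (fun t : ℝ => (8 * bb n * t - 4) * Real.exp (-(bb n * t))) (Ioi 0) := by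
  have h : (fun t : ℝ => (8 * bb n * t - 4) * Real.exp (-(bb n * t)))
      = fun t : ℝ => (8 * bb n) * (t * Real.exp (-(bb n * t))) - 4 * Real.exp (-(bb n * t)) := by
    funext t; ring
  rw [h]
  exact ((integrableOn_texp (bb_pos n)).const_mul _).sub
    ((integrableOn_exp_r (bb_pos n)).const_mul 4)

lemma integral_F (n : ℕ) :
    ∫ t in Ioi (0:ℝ), (8 * bb n * t - 4) * Real.exp (-(bb n * t)) = 4 / bb n := by
  have h : (fun t : ℝ => (8 * bb n * t - 4) * Real.exp (-(bb n * t)))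
      = fun t : ℝ => (8 * bb n) * (t * Real.exp (-(bb n * t))) - 4 * Real.exp (-(bb n * t)) := by
    funext t; ring
  rw [h, integral_sub ((integrableOn_texp (bb_pos n)).const_mul _)
    ((integrableOn_exp_r (bb_pos n)).const_mul 4),
    integral_const_mul, integral_const_mul, integral_texp_Ioi (bb_pos n),
    integral_exp_Ioi (bb_pos n)]
  have hb := (bb_pos n).ne'
  field_simp
  ring

lemma integral_normF_le (n : ℕ) :
    (∫ t in Ioi (0:ℝ), ‖(8 * bb n * t - 4) * Real.exp (-(bb n * t))‖) ≤ 12 / bb n := by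
  have hintb : IntegrableOn
      (fun t : ℝ => (8 * bb n) * (t * Real.exp (-(bb n * t))) + 4 * Real.exp (-(bb n * t)))
      (Ioi 0) :=
    ((integrableOn_texp (bb_pos n)).const_mul _).add ((integrableOn_exp_r (bb_pos n)).const_mul 4)
  have hle : ∀ t ∈ Ioi (0:ℝ), ‖(8 * bb n * t - 4) * Real.exp (-(bb n * t))‖
      ≤ (8 * bb n) * (t * Real.exp (-(bb n * t))) + 4 * Real.exp (-(bb n * t)) := by
    intro t ht
    have htpos : (0:ℝ) < t := mem_Ioi.mp ht
    rw [norm_mul, Real.norm_eq_abs, Real.norm_eq_abs, Real.abs_exp]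
    have h0 : (0:ℝ) ≤ 8 * bb n * t := by
      have := (bb_pos n).le
      positivity
    have habs : |8 * bb n * t - 4| ≤ 8 * bb n * t + 4 := abs_le.mpr ⟨by linarith, by linarith⟩
    calc |8 * bb n * t - 4| * Real.exp (-(bb n * t))
        ≤ (8 * bb n * t + 4) * Real.exp (-(bb n * t)) :=
          mul_le_mul_of_nonneg_right habs (Real.exp_pos _).le
      _ = (8 * bb n) * (t * Real.exp (-(bb n * t))) + 4 * Real.exp (-(bb n * t)) := by ring
  calc (∫ t in Ioi (0:ℝ), ‖(8 * bb n * t - 4) * Real.exp (-(bb n * t))‖)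
      ≤ ∫ t in Ioi (0:ℝ),
          ((8 * bb n) * (t * Real.exp (-(bb n * t))) + 4 * Real.exp (-(bb n * t))) :=
        setIntegral_mono_on (integrableOn_F n).norm hintb measurableSet_Ioi hle
    _ = (8 * bb n) * (1 / bb n ^ 2) + 4 * (1 / bb n) := by
        rw [integral_add ((integrableOn_texp (bb_pos n)).const_mul _)
          ((integrableOn_exp_r (bb_pos n)).const_mul 4), integral_const_mul,
          integral_const_mul, integral_texp_Ioi (bb_pos n), integral_exp_Ioi (bb_pos n)]
    _ = 12 / bb n := by
        have hb := (bb_pos n).ne'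
        field_simp
        ring

lemma summable_integral_normF :
    Summable (fun n : ℕ =>
      ∫ t in Ioi (0:ℝ), ‖(8 * bb n * t - 4) * Real.exp (-(bb n * t))‖) := by
  have h1 : Summable (fun n : ℕ => (1:ℝ) / ((n:ℝ)+1)^2) := by
    have h := Real.summable_one_div_nat_pow.mpr (le_refl 2)
    have h2 := (summable_nat_add_iff 1).mpr h
    refine h2.congr fun n => ?_
    push_cast
    ring
  have h2 := h1.mul_left (24 / π^2)
  refine Summable.of_nonneg_of_le (fun n => integral_nonneg fun t => norm_nonneg _)
    (fun n => le_trans (integral_normF_le n) ?_) h2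
  have hlow : (π^2/2) * ((n:ℝ)+1)^2 ≤ bb n := by
    unfold bb
    have hn : (0:ℝ) ≤ (n:ℝ) := Nat.cast_nonneg n
    have hp : (0:ℝ) ≤ π^2 := sq_nonneg π
    nlinarith [mul_nonneg hp hn, mul_nonneg (mul_nonneg hp hn) hn]
  have hpos : (0:ℝ) < (π^2/2) * ((n:ℝ)+1)^2 := by positivity
  calc (12:ℝ) / bb n ≤ 12 / ((π^2/2) * ((n:ℝ)+1)^2) :=
        div_le_div_of_nonneg_left (by norm_num) hpos hlow
    _ = 24 / π^2 * (1 / ((n:ℝ)+1)^2) := by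
        have hne : ((n:ℝ)+1) ≠ 0 := by positivity
        field_simp
        ring

lemma hasSum_odd_sq : HasSum (fun n : ℕ => (1:ℝ) / (2*(n:ℝ)+1)^2) (π^2/8) := by
  have h := hasSum_zeta_two
  have he : HasSum (fun k : ℕ => (1:ℝ) / ((2*k : ℕ):ℝ)^2) (π^2/6/4) := by
    refine (h.div_const 4).congr_fun fun k => ?_
    push_cast
    rw [div_div, one_div, one_div]
    congr 1
    ring
  have hinj : Function.Injective (fun k : ℕ => 2*k+1) := by
    intro a b hab
    have hab' : 2*a+1 = 2*b+1 := hab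
    omega
  have hos : Summable ((fun n : ℕ => (1:ℝ) / (n:ℝ)^2) ∘ (fun k : ℕ => 2*k+1)) :=
    h.summable.comp_injective hinj
  have ho : HasSum (fun k : ℕ => (1:ℝ) / (((2*k+1 : ℕ)):ℝ)^2)
      (∑' k : ℕ, (1:ℝ) / (((2*k+1 : ℕ)):ℝ)^2) := hos.hasSum
  have htot := HasSum.even_add_odd (f := fun n : ℕ => (1:ℝ) / (n:ℝ)^2) he ho
  have hval := h.unique htot
  have hL : (∑' k : ℕ, (1:ℝ) / (((2*k+1 : ℕ)):ℝ)^2) = π^2/8 := by linarith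
  rw [hL] at ho
  refine ho.congr_fun fun k => ?_
  push_cast
  ring_nf

lemma tsum_four_div_bb : (∑' n : ℕ, 4 / bb n) = 1 := by
  have h := hasSum_odd_sq.mul_left (8 / π^2)
  have h2 : HasSum (fun n : ℕ => 4 / bb n) ((8/π^2) * (π^2/8)) := by
    refine h.congr_fun fun n => ?_
    unfold bb
    have h1 : ((n:ℝ)+1/2) ≠ 0 := by positivity
    have h4 : (2*(n:ℝ)+1) ≠ 0 := by positivity
    field_simp
    ring
  have h3 : (8/π^2) * (π^2/8) = 1 := by
    field_simp
  rw [h3] at h2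
  exact h2.tsum_eq

end CoverAux

/-- `∫_0^∞ ∑_{n≥0} 4 (-1)^n (n+1)² / (√(2π) t^{3/2}) exp (-(n+1)²/(2t)) dt = 1`,
i.e. the cover-time series is a probability density on `(0, ∞)`. -/
theorem stmt_14 :
    ∫ t in Set.Ioi (0 : ℝ),
        ∑' n : ℕ, 4 * (-1) ^ n * ((n : ℝ) + 1) ^ 2
          / (Real.sqrt (2 * Real.pi) * t ^ ((3 : ℝ) / 2))
          * Real.exp (-((n : ℝ) + 1) ^ 2 / (2 * t))
      = 1 := by
  have h1 : (∫ t in Set.Ioi (0 : ℝ),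
        ∑' n : ℕ, 4 * (-1) ^ n * ((n : ℝ) + 1) ^ 2
          / (Real.sqrt (2 * Real.pi) * t ^ ((3 : ℝ) / 2))
          * Real.exp (-((n : ℝ) + 1) ^ 2 / (2 * t)))
      = ∫ t in Set.Ioi (0 : ℝ),
          ∑' n : ℕ, (8 * CoverAux.bb n * t - 4) * Real.exp (-(CoverAux.bb n * t)) := by
    refine setIntegral_congr_fun measurableSet_Ioi (fun t ht => ?_)
    exact CoverAux.p_eq (Set.mem_Ioi.mp ht)
  rw [h1, ← MeasureTheory.integral_tsum_of_summable_integral_norm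
    (fun n => CoverAux.integrableOn_F n) CoverAux.summable_integral_normF]
  exact (tsum_congr (fun n => CoverAux.integral_F n)).trans CoverAux.tsum_four_div_bb
end
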